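/- The exponential generating function f(x) = ∑_{t≥1} t^{t-1}·x^t/t! for rooted labeled trees satisfies f(x)² = ∑_{t≥2} 2·(t-1)·t^{t-2}·x^t/t! as formal power series. -/

import Mathlib

open Finset fwdDiff Polynomial

lemma fwdDiff_pow_eq_zero {R : Type*} [CommRing R] (m : ℕ) :
    ∀ n, m < n → (Δ_[(1:R)])^[n] (fun y : R => y ^ m) = 0 := by
  induction m using Nat.strong_induction_on with
  | _ m IH =>
    intro n hn
    obtain ⟨n, rfl⟩ : ∃ n', n = n' + 1 := ⟨n - 1, by omega⟩
    rw [Function.iterate_succ_apply]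
    have h1 : Δ_[(1:R)] (fun y : R => y ^ m)
        = ∑ j ∈ range m, (m.choose j : R) • (fun y : R => y ^ j) := by
      funext y
      rw [Finset.sum_apply]
      simp only [fwdDiff, Pi.smul_apply, smul_eq_mul]
      rw [add_pow, Finset.sum_range_succ]
      simp [mul_comm]
    rw [h1, fwdDiff_iter_finset_sum]
    rw [Finset.sum_eq_zero]
    intro j hj
    have hj' := mem_range.mp hj
    rw [fwdDiff_iter_const_smul, IH j hj' n (by omega), smul_zero]

lemma sum_alt_zero {R : Type*} [CommRing R] {m n : ℕ} (h : m < n) (x : R) :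
    ∑ k ∈ range (n + 1), (-1 : R) ^ (n - k) * (n.choose k : R) * (x + k) ^ m = 0 := by
  have H := fwdDiff_iter_eq_sum_shift (1:R) (fun y : R => y ^ m) n x
  rw [fwdDiff_pow_eq_zero m n h] at H
  simp only [Pi.zero_apply, zsmul_eq_mul, Int.cast_mul, Int.cast_pow, Int.cast_neg,
    Int.cast_one, Int.cast_natCast, nsmul_eq_mul, mul_one] at H
  exact H.symm

def abelC {S : Type*} [CommRing S] (x : S) (k : ℕ) : S :=
  if k = 0 then 1 else x * (x + k) ^ (k - 1)

lemma abel_identity {S : Type*} [CommRing S] [IsDomain S] [CharZero S] (x : S) :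
    ∀ (n : ℕ) (y : S),
      ∑ k ∈ range (n + 1),
          C ((n.choose k : S) * abelC x k) * (X + C (y + (n - k : ℕ))) ^ (n - k)
        = (X + C (y + x + n)) ^ n := by
  intro n
  induction n with
  | zero => intro y; simp [abelC]
  | succ n IH =>
    intro y
    set L : S[X] := ∑ k ∈ range (n + 2),
        C (((n+1).choose k : S) * abelC x k) * (X + C (y + (n + 1 - k : ℕ))) ^ (n + 1 - k) with hLdef
    set Rp : S[X] := (X + C (y + x + ((n+1:ℕ) : S))) ^ (n+1) with hRdef
    have hder : derivative L = derivative Rp := by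
      rw [hLdef, hRdef, derivative_sum]
      simp only [derivative_C_mul, derivative_pow, derivative_X_add_C, mul_one]
      rw [Finset.sum_range_succ]
      simp only [Nat.sub_self, Nat.cast_zero, C_0, zero_mul, add_zero, pow_zero,
        derivative_one, mul_zero]
      have hmatch : ∀ k ∈ range (n+1),
          C (((n+1).choose k : S) * abelC x k) *
            (C ((n + 1 - k : ℕ) : S) * (X + C (y + (n + 1 - k : ℕ))) ^ (n + 1 - k - 1))
          = C (((n+1:ℕ) : S)) *
            (C ((n.choose k : S) * abelC x k) * (X + C ((y+1) + (n - k : ℕ))) ^ (n - k)) := by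
        intro k hk
        have hk' := mem_range.mp hk
        have h1 : (n + 1 - k : ℕ) - 1 = n - k := by omega
        have h2 : (y+1) + ((n - k : ℕ) : S) = y + ((n + 1 - k : ℕ) : S) := by
          rw [Nat.cast_sub (by omega : k ≤ n), Nat.cast_sub (by omega : k ≤ n + 1)]
          push_cast; ring
        have h4 : (n + 1 - k) * ((n+1).choose k) = (n+1) * (n.choose k) :=
          (mul_comm _ _).trans ((Nat.choose_mul_succ_eq n k).symm.trans (mul_comm _ _))
        have h3 : ((n + 1 - k : ℕ) : S) * (((n+1).choose k : ℕ) : S)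
            = (((n+1:ℕ)) : S) * ((n.choose k : ℕ) : S) := by exact_mod_cast congrArg Nat.cast h4
        rw [h1, ← h2, ← mul_assoc, ← mul_assoc, ← C_mul, ← C_mul]
        congr 1
        rw [C_inj]
        linear_combination (abelC x k) * h3
      rw [Finset.sum_congr rfl hmatch, ← Finset.mul_sum, IH (y+1)]
      rw [Nat.add_sub_cancel]
      have : y + 1 + x + (n : S) = y + x + ((n+1:ℕ) : S) := by push_cast; ring
      rw [this]
    -- now conclude L = Rp
    have hd0 : derivative (L - Rp) = 0 := by rw [derivative_sub, hder, sub_self]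
    have hsub : L - Rp = C ((L - Rp).coeff 0) := eq_C_of_derivative_eq_zero hd0
    set t : S := -(y + x + ((n+1:ℕ) : S)) with htdef
    have hevalR : eval t Rp = 0 := by
      rw [hRdef, eval_pow, eval_add, eval_X, eval_C, htdef]
      rw [neg_add_cancel, zero_pow (Nat.succ_ne_zero n)]
    have hevalL : eval t L = 0 := by
      rw [hLdef, eval_finset_sum]
      have hterm : ∀ k ∈ range (n + 2),
          eval t (C (((n+1).choose k : S) * abelC x k) * (X + C (y + (n + 1 - k : ℕ))) ^ (n + 1 - k))
          = x * ((-1 : S) ^ (n + 1 - k) * (((n+1).choose k : ℕ) : S) * (x + k) ^ n) := by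
        intro k hk
        have hk' := mem_range.mp hk
        have harg : t + (y + ((n + 1 - k : ℕ) : S)) = -(x + (k : S)) := by
          rw [htdef, Nat.cast_sub (by omega : k ≤ n + 1)]; push_cast; ring
        rw [eval_mul, eval_pow, eval_add, eval_X, eval_C, eval_C, harg, neg_pow]
        rcases Nat.eq_zero_or_pos k with hk0 | hk0
        · subst hk0
          simp only [abelC, reduceIte, mul_one, Nat.cast_zero, add_zero, Nat.sub_zero,
            Nat.choose_zero_right, Nat.cast_one, one_mul]
          ring
        · have hpow : (x + (k:S)) ^ (k - 1) * (x + (k:S)) ^ (n + 1 - k) = (x + (k:S)) ^ n := by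
            rw [← pow_add]; congr 1; omega
          rw [abelC, if_neg (by omega : ¬ k = 0)]
          linear_combination (((n+1).choose k : ℕ) : S) * x * (-1 : S) ^ (n + 1 - k) * hpow
      rw [Finset.sum_congr rfl hterm, ← Finset.mul_sum,
        sum_alt_zero (Nat.lt_succ_self n) x, mul_zero]
    have h0 : (L - Rp).coeff 0 = 0 := by
      have h := congrArg (eval t) hsub
      rw [eval_sub, hevalL, hevalR, eval_C, sub_zero] at h
      exact h.symm
    have : L - Rp = 0 := by rw [hsub, h0, C_0]
    exact sub_eq_zero.mp this

lemma coeff_one_X_mul {R : Type*} [Semiring R] (q : R[X]) : (X * q).coeff 1 = q.coeff 0 := by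
  simpa using coeff_X_mul q 0

lemma tree_star (n : ℕ) :
    ∑ k ∈ range (n + 1),
        (if k = 0 then (0:ℚ) else (n.choose k : ℚ) * (k : ℚ) ^ (k - 1) * ((n - k : ℕ) : ℚ) ^ (n - k))
      = (n : ℚ) ^ (n - 1) * (n.choose 1 : ℚ) := by
  have h := abel_identity (S := Polynomial ℚ) X n 0
  have h2 := congrArg (fun p => (Polynomial.eval (Polynomial.C 0) p).coeff 1) h
  simp only [eval_finset_sum, eval_mul, eval_pow, eval_add, eval_X, eval_C, C_0, zero_add,
    finset_sum_coeff] at h2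
  rw [show ((n : ℕ) : Polynomial ℚ) = C ((n : ℕ) : ℚ) from (C_eq_natCast _).symm,
    coeff_X_add_C_pow] at h2
  rw [← h2]
  apply Finset.sum_congr rfl
  intro k hk
  rcases eq_or_ne k 0 with hk0 | hk0
  · subst hk0
    rw [if_pos rfl, show abelC (X : Polynomial ℚ) 0 = 1 from if_pos rfl, mul_one,
      show ((n.choose 0 : ℕ) : Polynomial ℚ) = C ((n.choose 0 : ℕ) : ℚ) from (C_eq_natCast _).symm,
      show (((n - 0 : ℕ) : ℕ) : Polynomial ℚ) = C (((n - 0 : ℕ)) : ℚ) from (C_eq_natCast _).symm,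
      ← C_pow, ← C_mul, coeff_C]
    simp
  · rw [if_neg hk0, abelC, if_neg hk0]
    rw [show ((k : ℕ) : Polynomial ℚ) = C ((k : ℕ) : ℚ) from (C_eq_natCast _).symm,
      show ((n.choose k : ℕ) : Polynomial ℚ) = C ((n.choose k : ℕ) : ℚ) from (C_eq_natCast _).symm,
      show (((n - k : ℕ) : ℕ) : Polynomial ℚ) = C (((n - k : ℕ)) : ℚ) from (C_eq_natCast _).symm]
    rw [← C_pow, coeff_mul_C, coeff_C_mul, coeff_one_X_mul, coeff_X_add_C_pow]
    simp only [Nat.sub_zero, Nat.choose_zero_right, Nat.cast_one, mul_one]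

lemma key (t : ℕ) (ht : 2 ≤ t) :
    ∑ k ∈ range (t + 1),
        (if k = 0 then (0:ℚ) else (k : ℚ) ^ (k - 1) / (k.factorial : ℚ)) *
        (if t - k = 0 then (0:ℚ) else ((t - k : ℕ) : ℚ) ^ (t - k - 1) / ((t - k).factorial : ℚ))
      = 2 * ((t : ℚ) - 1) * (t : ℚ) ^ (t - 2) / (t.factorial : ℚ) := by
  have ht0 : (t : ℚ) ≠ 0 := by positivity
  have hfac : (t.factorial : ℚ) ≠ 0 := by exact_mod_cast t.factorial_ne_zero
  -- definitions
  set g : ℕ → ℚ := fun k =>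
    if k = 0 ∨ t ≤ k then 0 else (t.choose k : ℚ) * (k:ℚ)^(k-1) * ((t-k:ℕ):ℚ)^(t-k-1) with hg
  set B : ℕ → ℚ := fun k =>
    if k = 0 ∨ t ≤ k then 0 else (t.choose k : ℚ) * (k:ℚ)^k * ((t-k:ℕ):ℚ)^(t-k-1) with hB
  set Sm : ℕ → ℚ := fun k =>
    if k = 0 ∨ t ≤ k then 0 else (t.choose k : ℚ) * (k:ℚ)^(k-1) * ((t-k:ℕ):ℚ)^(t-k) with hSm
  -- Step 1: LHS = (∑ g)/t!
  have step1 : ∑ k ∈ range (t + 1),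
        (if k = 0 then (0:ℚ) else (k : ℚ) ^ (k - 1) / (k.factorial : ℚ)) *
        (if t - k = 0 then (0:ℚ) else ((t - k : ℕ) : ℚ) ^ (t - k - 1) / ((t - k).factorial : ℚ))
      = (∑ k ∈ range (t + 1), g k) / (t.factorial : ℚ) := by
    rw [Finset.sum_div]
    apply Finset.sum_congr rfl
    intro k hk
    have hk' := mem_range.mp hk
    rcases eq_or_ne k 0 with h0 | h0
    · subst h0; simp [hg]
    rcases le_or_gt t k with h1 | h1
    · rw [if_neg h0, if_pos (by omega : t - k = 0), mul_zero, hg]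
      simp [h1]
    · rw [if_neg h0, if_neg (by omega : ¬ t - k = 0), hg]
      simp only [h0, h1.not_ge, or_self, if_false]
      have hck : t.choose k * k.factorial * (t - k).factorial = t.factorial :=
        Nat.choose_mul_factorial_mul_factorial h1.le
      have hckq : (t.choose k : ℚ) * (k.factorial : ℚ) * ((t - k).factorial : ℚ)
          = (t.factorial : ℚ) := by exact_mod_cast congrArg Nat.cast hck
      have hkf : (k.factorial : ℚ) ≠ 0 := by exact_mod_cast k.factorial_ne_zero
      have hkf2 : ((t - k).factorial : ℚ) ≠ 0 := by exact_mod_cast (t - k).factorial_ne_zero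
      field_simp
      linear_combination -hckq
  rw [step1]
  -- Step 2: ∑ Sm
  have hSmsum : ∑ k ∈ range (t + 1), Sm k = (t:ℚ) * (t:ℚ)^(t-1) - (t:ℚ)^(t-1) := by
    have hstar := tree_star t
    rw [Finset.sum_range_succ] at hstar
    have hlast : (if t = 0 then (0:ℚ)
        else (t.choose t : ℚ) * (t : ℚ) ^ (t - 1) * ((t - t : ℕ) : ℚ) ^ (t - t))
        = (t:ℚ)^(t-1) := by
      rw [if_neg (by omega), Nat.sub_self]
      simp
    rw [hlast] at hstar
    rw [Finset.sum_range_succ]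
    have hSt : Sm t = 0 := by simp [hSm]
    rw [hSt, add_zero]
    have : ∑ k ∈ range t, Sm k = ∑ k ∈ range t,
        (if k = 0 then (0:ℚ) else (t.choose k : ℚ) * (k : ℚ) ^ (k - 1) * ((t - k : ℕ) : ℚ) ^ (t - k)) := by
      apply Finset.sum_congr rfl
      intro k hk
      have hk' := mem_range.mp hk
      rcases eq_or_ne k 0 with h0 | h0
      · simp [hSm, h0]
      · rw [hSm]; simp only [h0, hk'.not_ge, or_self, if_false, if_neg h0]
    rw [this]
    have hch1 : (t.choose 1 : ℚ) = (t : ℚ) := by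
      rw [Nat.choose_one_right]
    linarith [hstar, hch1 ▸ hstar]
  -- Step 3: ∑ B = ∑ Sm
  have hBsum : ∑ k ∈ range (t + 1), B k = ∑ k ∈ range (t + 1), Sm k := by
    rw [← Finset.sum_range_reflect B (t+1)]
    apply Finset.sum_congr rfl
    intro k hk
    have hk' := mem_range.mp hk
    have hidx : t + 1 - 1 - k = t - k := by omega
    rw [hidx]
    rcases eq_or_ne k 0 with h0 | h0
    · subst h0
      simp [hB, hSm]
    rcases le_or_gt t k with h1 | h1
    · have : t - k = 0 := by omega
      rw [this, hB, hSm]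
      simp [h1]
    · rw [hB, hSm]
      simp only
      rw [if_neg (by omega), if_neg (by omega)]
      have e1 : t - (t - k) = k := by omega
      have e2 : t.choose (t - k) = t.choose k := Nat.choose_symm h1.le
      rw [e1, e2]
      have e3 : t - k - 1 + 1 = t - k := by omega
      have e4 : ((t - k : ℕ) : ℚ) ^ (t - k) = ((t - k : ℕ) : ℚ) ^ (t - k - 1 + 1) := by rw [e3]
      rw [e4, pow_succ]
      ring
  -- Step 4: t * ∑ g = ∑ B + ∑ Sm
  have step4 : (t:ℚ) * ∑ k ∈ range (t + 1), g k
      = ∑ k ∈ range (t + 1), B k + ∑ k ∈ range (t + 1), Sm k := by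
    rw [Finset.mul_sum, ← Finset.sum_add_distrib]
    apply Finset.sum_congr rfl
    intro k hk
    have hk' := mem_range.mp hk
    rcases eq_or_ne k 0 with h0 | h0
    · subst h0; simp [hg, hB, hSm]
    rcases le_or_gt t k with h1 | h1
    · rw [hg, hB, hSm]; simp [h1]
    · rw [hg, hB, hSm]
      simp only
      rw [if_neg (by omega), if_neg (by omega), if_neg (by omega)]
      have e1 : (k:ℚ) ^ k = (k:ℚ) ^ (k - 1) * k := by
        rw [← pow_succ]; congr 1; omega
      have e2 : ((t-k:ℕ):ℚ) ^ (t-k) = ((t-k:ℕ):ℚ) ^ (t-k-1) * ((t-k:ℕ):ℚ) := by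
        rw [← pow_succ]; congr 1; omega
      have e3 : ((t-k:ℕ):ℚ) = (t:ℚ) - (k:ℚ) := by
        rw [Nat.cast_sub h1.le]
      rw [e1, e2, e3]
      ring
  -- combine
  have hsum : ∑ k ∈ range (t + 1), g k = 2 * ((t : ℚ) - 1) * (t : ℚ) ^ (t - 2) := by
    apply mul_left_cancel₀ ht0
    rw [step4, hBsum, hSmsum]
    have e5 : (t:ℚ) ^ (t - 1) = (t:ℚ) ^ (t - 2) * (t:ℚ) := by
      rw [← pow_succ]; congr 1; omega
    rw [e5]; ring
  rw [hsum]

theorem tree_egf_square :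
    (PowerSeries.mk fun t : ℕ =>
        if t = 0 then (0 : ℚ) else (t : ℚ) ^ (t - 1) / (t.factorial : ℚ)) ^ 2
      = PowerSeries.mk fun t : ℕ =>
          if 2 ≤ t then 2 * ((t : ℚ) - 1) * (t : ℚ) ^ (t - 2) / (t.factorial : ℚ)
          else 0 := by
  ext t
  rw [pow_two, PowerSeries.coeff_mul, PowerSeries.coeff_mk,
    Finset.Nat.sum_antidiagonal_eq_sum_range_succ_mk]
  simp only [PowerSeries.coeff_mk]
  rcases Nat.lt_or_ge t 2 with h2 | h2
  · interval_cases t <;> simp [Finset.sum_range_succ]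
  · rw [if_pos h2, ← key t h2]
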